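/- Let D be a recurrent SCC of B, let d ∈ D, and suppose w ∈ S* is such that d⇒w is defined, d ∈ d⇒w, and d⇒w is not a cut. Then there exist v ∈ S* and e ∈ D with e ≠ d such that d⇒v is defined, {d, e} ⊆ d⇒v, and e⇒w is defined and nonempty. Moreover, for any such e one has d⇒w ∩ e⇒w = ∅, and hence d⇒(vw) ⊇ {d,e}⇒w ⊋ d⇒w. -/

import Mathlib

open Matrix MeasureTheory

attribute [local instance] Classical.propDecidable

/-- A Büchi automaton with state space `Q` and alphabet `A`. -/
structure BA (Q A : Type) where
  delta : Q → A → Set Q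
  init : Set Q
  acc : Set Q

namespace BA

variable {Q A : Type}

/-- A run of the automaton on an infinite word. -/
def InfRun (𝒜 : BA Q A) (w : ℕ → A) (ρ : ℕ → Q) : Prop :=
  ρ 0 ∈ 𝒜.init ∧ ∀ i, ρ (i + 1) ∈ 𝒜.delta (ρ i) (w i)

/-- An accepting run: some accepting state occurs infinitely often. -/
def AccRun (𝒜 : BA Q A) (w : ℕ → A) (ρ : ℕ → Q) : Prop :=
  𝒜.InfRun w ρ ∧ ∃ q ∈ 𝒜.acc, {i : ℕ | ρ i = q}.Infinite

/-- The language of infinite words having at least one accepting run. -/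
def Lang (𝒜 : BA Q A) : Set (ℕ → A) := {w | ∃ ρ, 𝒜.AccRun w ρ}

/-- Unambiguous: every infinite word has at most one accepting run. -/
def Unambiguous (𝒜 : BA Q A) : Prop :=
  ∀ w ρ₁ ρ₂, 𝒜.AccRun w ρ₁ → 𝒜.AccRun w ρ₂ → ρ₁ = ρ₂

/-- `𝒜.IsRun q w ρ r` : the list `ρ` (of length `|w| + 1`) is a run for the
finite word `w` from `q` to `r`. -/
def IsRun (𝒜 : BA Q A) : Q → List A → List Q → Q → Prop
  | q, [], ρ, r => q = r ∧ ρ = [q]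
  | q, a :: w, ρ, r => ∃ q' ρ', ρ = q :: ρ' ∧ q' ∈ 𝒜.delta q a ∧ 𝒜.IsRun q' w ρ' r

/-- A diamond: two distinct runs for the same finite word with the
same start and end states. -/
def HasDiamond (𝒜 : BA Q A) : Prop :=
  ∃ q r w ρ₁ ρ₂, ρ₁ ≠ ρ₂ ∧ 𝒜.IsRun q w ρ₁ r ∧ 𝒜.IsRun q w ρ₂ r

/-- Every state is reachable from some initial state. -/
def AllReachable (𝒜 : BA Q A) : Prop :=
  ∀ q, ∃ q₀ ∈ 𝒜.init, ∃ w ρ, 𝒜.IsRun q₀ w ρ q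

/-- The automaton `𝒜` with `q` as the only initial state. -/
def fromState (𝒜 : BA Q A) (q : Q) : BA Q A := { 𝒜 with init := {q} }

/-- `|δ|`: the number of pairs `(q, r)` such that `r ∈ δ(q, a)` for some letter `a`. -/
noncomputable def numTrans (𝒜 : BA Q A) : ℕ := {p : Q × Q | ∃ a, p.2 ∈ 𝒜.delta p.1 a}.ncard

end BA

/-- A (row-)stochastic matrix with nonnegative entries. -/
def IsMarkov {S : Type} [Fintype S] (M : Matrix S S ℝ) : Prop :=
  (∀ s t, 0 ≤ M s t) ∧ ∀ s, ∑ t, M s t = 1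

/-- `Pr s` is the probability measure of the Markov chain `M` started at `s`:
the cylinder of the finite sequence `u 0, …, u n` has measure
`M (u 0) (u 1) ⋯ M (u (n-1)) (u n)` if `u 0 = s`, and `0` otherwise. -/
def CylinderSpec {S : Type} [Fintype S] [MeasurableSpace S]
    (M : Matrix S S ℝ) (Pr : S → Measure (ℕ → S)) : Prop :=
  ∀ (s : S) (n : ℕ) (u : ℕ → S),
    Pr s {ω | ∀ i ≤ n, ω i = u i} =
      if u 0 = s then ENNReal.ofReal (∏ i ∈ Finset.range n, M (u i) (u (i + 1))) else 0

/-- The vector `z`, given by `z ⟨q, s⟩ = Pr_s (L(𝒜_q))`. -/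
noncomputable def zvec {Q S : Type} [MeasurableSpace S]
    (𝒜 : BA Q S) (Pr : S → Measure (ℕ → S)) : Q × S → ℝ :=
  fun p => ((Pr p.2) ((𝒜.fromState p.1).Lang)).toReal

/-- The matrix `B` built from the automaton `𝒜` and the Markov chain `M`. -/
noncomputable def Bmat {Q S : Type} (𝒜 : BA Q S) (M : Matrix S S ℝ) :
    Matrix (Q × S) (Q × S) ℝ :=
  Matrix.of fun p p' => if p'.1 ∈ 𝒜.delta p.1 p.2 then M p.2 p'.2 else 0

/-- The spectral radius of a real square matrix: the largest absolute value of
its complex eigenvalues. -/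
noncomputable def specRad {n : Type} [Fintype n] [DecidableEq n] (N : Matrix n n ℝ) : ℝ :=
  sSup {x : ℝ | ∃ c ∈ spectrum ℂ (N.map Complex.ofReal), x = ‖c‖}

/-- `D` is a strongly connected component of the graph of the nonnegative matrix `N`
(edges are the positive entries). -/
def IsSCC {V : Type} (N : Matrix V V ℝ) (D : Set V) : Prop :=
  ∃ v, D = {w | Relation.ReflTransGen (fun a b => 0 < N a b) v w ∧
               Relation.ReflTransGen (fun a b => 0 < N a b) w v}

/-- The submatrix `N_{D,D}`. -/
def subMat {V : Type} (N : Matrix V V ℝ) (D : Set V) : Matrix ↥D ↥D ℝ :=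
  N.submatrix (Subtype.val) (Subtype.val)

/-- An SCC `D` of `B` is recurrent if `ρ(B_{D,D}) = 1`. -/
def RecurrentSCC {Q S : Type} [Fintype Q] [Fintype S]
    (𝒜 : BA Q S) (M : Matrix S S ℝ) (D : Set (Q × S)) : Prop :=
  specRad (subMat (Bmat 𝒜 M) D) = 1

/-- An SCC `D` of `B` is accepting if it contains a pair `⟨q, s⟩` with `q` accepting. -/
def AcceptingSCC {Q S : Type} (𝒜 : BA Q S) (D : Set (Q × S)) : Prop :=
  ∃ p ∈ D, p.1 ∈ 𝒜.acc

/-- One step of the fibre operation: `f ⇒ t`. -/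
def fibStep {Q S : Type} (𝒜 : BA Q S) (D : Set (Q × S)) (f : Set (Q × S)) (t : S) :
    Set (Q × S) :=
  {p ∈ D | p.2 = t ∧ ∃ e ∈ f, p.1 ∈ 𝒜.delta e.1 e.2}

/-- The fibre operation along a word: `f ⇒ w`. -/
def fibRun {Q S : Type} (𝒜 : BA Q S) (D : Set (Q × S)) (f : Set (Q × S)) :
    List S → Set (Q × S)
  | [] => f
  | t :: w => fibRun 𝒜 D (fibStep 𝒜 D f t) w

/-- A word `s₁ ⋯ sₙ` is enabled if `M_{sᵢ, sᵢ₊₁} > 0` for all `i < n`. -/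
def Enabled {S : Type} (M : Matrix S S ℝ) (l : List S) : Prop :=
  l.Chain' fun a b => 0 < M a b

/-- `c` is a cut: `c = d ⇒ v` for some `d ∈ D` and enabled `v`, and `c ⇒ w`
is nonempty for every `w` for which it is defined. -/
def IsCut {Q S : Type} (𝒜 : BA Q S) (M : Matrix S S ℝ) (D : Set (Q × S))
    (c : Set (Q × S)) : Prop :=
  ∃ d ∈ D, ∃ v : List S, Enabled M (d.2 :: v) ∧ c = fibRun 𝒜 D {d} v ∧
    ∀ w : List S, Enabled M (v.getLastD d.2 :: w) → fibRun 𝒜 D c w ≠ ∅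

/-- The co-reachability set `Co(d)`: those `e ∈ D` with `{d, e} ⊆ d ⇒ w` for some `w`. -/
def Co {Q S : Type} (𝒜 : BA Q S) (M : Matrix S S ℝ) (D : Set (Q × S)) (d : Q × S) :
    Set (Q × S) :=
  {e ∈ D | ∃ w : List S, Enabled M (d.2 :: w) ∧
    d ∈ fibRun 𝒜 D {d} w ∧ e ∈ fibRun 𝒜 D {d} w}

/-- The matrix `Δ(t)` over `D`. -/
noncomputable def Delta {Q S : Type} (𝒜 : BA Q S) (M : Matrix S S ℝ) (D : Set (Q × S))
    (t : S) : Matrix ↥D ↥D ℝ :=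
  Matrix.of fun p p' =>
    if (p' : Q × S).2 = t ∧ 0 < M (p : Q × S).2 t ∧
       (p' : Q × S).1 ∈ 𝒜.delta (p : Q × S).1 (p : Q × S).2
    then 1 else 0

/-- The matrix `Δ(w)` for a word `w` (`Δ(ε)` is the identity). -/
noncomputable def DeltaW {Q S : Type} [Fintype Q] [Fintype S]
    (𝒜 : BA Q S) (M : Matrix S S ℝ) (D : Set (Q × S)) : List S → Matrix ↥D ↥D ℝ
  | [] => 1
  | t :: w => Delta 𝒜 M D t * DeltaW 𝒜 M D w

/-- The matrix `Δ′(t)` over `D`. -/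
noncomputable def Delta' {Q S : Type} (D : Set (Q × S)) (t : S) : Matrix ↥D ↥D ℝ :=
  Matrix.of fun p p' => if p = p' ∧ (p : Q × S).2 = t then 1 else 0

/-- The vector space `V(s)` spanned by the vectors `Δ′(s) Δ(w) y` for all words `w`. -/
noncomputable def Vspace {Q S : Type} [Fintype Q] [Fintype S]
    (𝒜 : BA Q S) (M : Matrix S S ℝ) (D : Set (Q × S)) (y : ↥D → ℝ) (s : S) :
    Submodule ℝ (↥D → ℝ) :=
  Submodule.span ℝ {x : ↥D → ℝ | ∃ w : List S, x = (Delta' D s * DeltaW 𝒜 M D w).mulVec y}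

/-- A vector `μ ∈ ℝ^D` is a fibre over `s` if it vanishes outside `Q × {s}`. -/
def IsFibreVec {Q S : Type} (D : Set (Q × S)) (μ : ↥D → ℝ) (s : S) : Prop :=
  ∀ p : ↥D, (p : Q × S).2 ≠ s → μ p = 0

/-- A pseudo-cut over `s` (with respect to the vector `zD`): a fibre `μ` over `s` with
`μᵀ Δ(w) zD = μᵀ zD` for all `w` such that `s w` is enabled. -/
def IsPseudoCut {Q S : Type} [Fintype Q] [Fintype S]
    (𝒜 : BA Q S) (M : Matrix S S ℝ) (D : Set (Q × S)) (zD : ↥D → ℝ)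
    (μ : ↥D → ℝ) (s : S) : Prop :=
  IsFibreVec D μ s ∧
  ∀ w : List S, Enabled M (s :: w) → μ ⬝ᵥ (DeltaW 𝒜 M D w).mulVec zD = μ ⬝ᵥ zD

/-- A `Co(d)`-pseudo-cut: a pseudo-cut over `d.2` that is nonzero at `d` and vanishes
outside `Co(d)`. -/
def IsCoPseudoCut {Q S : Type} [Fintype Q] [Fintype S]
    (𝒜 : BA Q S) (M : Matrix S S ℝ) (D : Set (Q × S)) (zD : ↥D → ℝ)
    (d : Q × S) (hd : d ∈ D) (μ : ↥D → ℝ) : Prop :=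
  IsPseudoCut 𝒜 M D zD μ d.2 ∧ μ ⟨d, hd⟩ ≠ 0 ∧
  ∀ e : ↥D, (e : Q × S) ∉ Co 𝒜 M D d → μ e = 0

/-- Auxiliary order: shortlex on reversed words. -/
def revLT {S : Type} [LinearOrder S] : List S → List S → Prop
  | [], u => u ≠ []
  | _ :: _, [] => False
  | a :: v, b :: w =>
      (a :: v).length < (b :: w).length ∨
      ((a :: v).length = (b :: w).length ∧ (a < b ∨ (a = b ∧ revLT v w)))

/-- The order `≪` on words: shortlex, but with words read from right to left. -/
def wordLT {S : Type} [LinearOrder S] (u v : List S) : Prop :=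
  revLT u.reverse v.reverse

section Aux
variable {Q S : Type} (𝒜 : BA Q S) (M : Matrix S S ℝ) (D : Set (Q × S))

lemma fibStep_subset (f : Set (Q × S)) (t : S) : fibStep 𝒜 D f t ⊆ D :=
  fun _ hp => hp.1

lemma fibStep_mono {f g : Set (Q × S)} (h : f ⊆ g) (t : S) :
    fibStep 𝒜 D f t ⊆ fibStep 𝒜 D g t := by
  rintro p ⟨hpD, hpt, e, he, hd⟩
  exact ⟨hpD, hpt, e, h he, hd⟩

lemma fibRun_mono {f g : Set (Q × S)} (h : f ⊆ g) (l : List S) :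
    fibRun 𝒜 D f l ⊆ fibRun 𝒜 D g l := by
  induction l generalizing f g with
  | nil => exact h
  | cons t l ih => exact ih (fibStep_mono 𝒜 D h t)

lemma fibStep_empty (t : S) : fibStep 𝒜 D ∅ t = ∅ := by
  ext p; simp [fibStep]

lemma fibRun_empty (l : List S) : fibRun 𝒜 D ∅ l = ∅ := by
  induction l with
  | nil => rfl
  | cons t l ih => simp only [fibRun, fibStep_empty]; exact ih

lemma fibRun_append (f : Set (Q × S)) (l₁ l₂ : List S) :
    fibRun 𝒜 D f (l₁ ++ l₂) = fibRun 𝒜 D (fibRun 𝒜 D f l₁) l₂ := by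
  induction l₁ generalizing f with
  | nil => rfl
  | cons t l ih => simp only [List.cons_append, fibRun]; exact ih _

lemma mem_fibRun_iff (l : List S) : ∀ (f : Set (Q × S)) (p : Q × S),
    p ∈ fibRun 𝒜 D f l ↔ ∃ e ∈ f, p ∈ fibRun 𝒜 D {e} l := by
  induction l with
  | nil => intro f p; simp [fibRun]
  | cons t l ih =>
    intro f p
    show p ∈ fibRun 𝒜 D (fibStep 𝒜 D f t) l ↔ _
    rw [ih]
    constructor
    · rintro ⟨g, ⟨hgD, hgt, e, he, hd⟩, hp⟩
      refine ⟨e, he, ?_⟩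
      show p ∈ fibRun 𝒜 D (fibStep 𝒜 D {e} t) l
      rw [ih]
      exact ⟨g, ⟨hgD, hgt, e, rfl, hd⟩, hp⟩
    · rintro ⟨e, he, hp⟩
      rw [show fibRun 𝒜 D {e} (t :: l) = fibRun 𝒜 D (fibStep 𝒜 D {e} t) l from rfl, ih] at hp
      obtain ⟨g, ⟨hgD, hgt, e', he', hd⟩, hp⟩ := hp
      cases he'
      exact ⟨g, ⟨hgD, hgt, e, he, hd⟩, hp⟩

lemma mem_D_of_mem_fibRun {f : Set (Q × S)} (hf : f ⊆ D) {l : List S} {p : Q × S}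
    (hp : p ∈ fibRun 𝒜 D f l) : p ∈ D := by
  induction l generalizing f with
  | nil => exact hf hp
  | cons t l ih => exact ih (fibStep_subset 𝒜 D f t) hp

lemma snd_of_mem_fibRun {f : Set (Q × S)} {s : S} (hf : ∀ q ∈ f, (q : Q × S).2 = s)
    {l : List S} {p : Q × S} (hp : p ∈ fibRun 𝒜 D f l) : p.2 = l.getLastD s := by
  induction l generalizing f s with
  | nil => exact hf p hp
  | cons t l ih =>
    rw [List.getLastD_cons]
    exact ih (fun q hq => hq.2.1) hp

lemma getLastD_append (l₁ l₂ : List S) (s : S) :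
    (l₁ ++ l₂).getLastD s = l₂.getLastD (l₁.getLastD s) := by
  induction l₁ generalizing s with
  | nil => rfl
  | cons a l ih => simp only [List.cons_append, List.getLastD_cons]; exact ih a

lemma enabled_append {l₁ l₂ : List S} {s : S} (h₁ : Enabled M (s :: l₁))
    (h₂ : Enabled M (l₁.getLastD s :: l₂)) : Enabled M (s :: (l₁ ++ l₂)) := by
  induction l₁ generalizing s with
  | nil => exact h₂
  | cons t l ih =>
    unfold Enabled at h₁ h₂ ⊢
    simp only [List.Chain', List.isChain_cons_cons] at h₁
    rw [List.getLastD_cons] at h₂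
    exact List.isChain_cons_cons.2 ⟨h₁.1, ih h₁.2 h₂⟩

lemma enabled_pair {s t : S} (h : 0 < M s t) : Enabled M (s :: [t]) :=
  List.isChain_pair.2 h

end Aux
section Runs
variable {Q S : Type} (𝒜 : BA Q S) (D : Set (Q × S))

lemma isRun_length {q r : Q} : ∀ {w : List S} {ρ : List Q}, 𝒜.IsRun q w ρ r →
    ρ.length = w.length + 1 := by
  intro w
  induction w generalizing q with
  | nil => rintro ρ ⟨rfl, rfl⟩; rfl
  | cons a w ih =>
    rintro ρ ⟨q', ρ', rfl, hq', hrun⟩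
    simp only [List.length_cons, ih hrun]

lemma isRun_shape {q r : Q} : ∀ {w : List S} {ρ : List Q}, 𝒜.IsRun q w ρ r →
    ∃ ρ₀, ρ = q :: ρ₀ := by
  intro w
  cases w with
  | nil => rintro ρ ⟨rfl, rfl⟩; exact ⟨[], rfl⟩
  | cons a w => rintro ρ ⟨q', ρ', rfl, _, _⟩; exact ⟨ρ', rfl⟩

lemma isRun_append {r r' : Q} {w₂ : List S} {ρ₂ : List Q} :
    ∀ {w₁ : List S} {q : Q} {ρ₁ : List Q}, 𝒜.IsRun q w₁ ρ₁ r → 𝒜.IsRun r w₂ ρ₂ r' →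
    𝒜.IsRun q (w₁ ++ w₂) (ρ₁.dropLast ++ ρ₂) r' := by
  intro w₁
  induction w₁ with
  | nil => rintro q ρ₁ ⟨rfl, rfl⟩ h₂; simpa using h₂
  | cons a w ih =>
    rintro q ρ₁ ⟨q', ρ', rfl, hq', hrun⟩ h₂
    obtain ⟨ρ₀, rfl⟩ := isRun_shape 𝒜 hrun
    rw [List.dropLast_cons₂, List.cons_append]
    exact ⟨q', (q' :: ρ₀).dropLast ++ ρ₂, rfl, hq', ih hrun h₂⟩

lemma run_of_mem_fibRun : ∀ {l : List S} {g p : Q × S}, p ∈ fibRun 𝒜 D {g} l →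
    ∃ ρ, 𝒜.IsRun g.1 ((g.2 :: l).dropLast) (g.1 :: ρ) p.1 := by
  intro l
  induction l with
  | nil =>
    intro g p hp
    cases hp
    exact ⟨[], rfl, rfl⟩
  | cons t l ih =>
    intro g p hp
    rw [show fibRun 𝒜 D {g} (t :: l) = fibRun 𝒜 D (fibStep 𝒜 D {g} t) l from rfl,
      mem_fibRun_iff] at hp
    obtain ⟨g', ⟨hg'D, hg't, e, he, hδ⟩, hp⟩ := hp
    cases he
    obtain ⟨ρ, hρ⟩ := ih hp
    rw [hg't] at hρ
    exact ⟨g'.1 :: ρ, g'.1, g'.1 :: ρ, rfl, hδ, hρ⟩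

/-- extension of a run by one automaton step -/
lemma isRun_snoc {q r gq : Q} {w : List S} {ρ : List Q} (h : 𝒜.IsRun q w ρ r)
    {a : S} (hδ : gq ∈ 𝒜.delta r a) :
    𝒜.IsRun q (w ++ [a]) (ρ.dropLast ++ [r, gq]) gq :=
  isRun_append 𝒜 h ⟨gq, [gq], rfl, hδ, rfl, rfl⟩

/-- two distinct members of a fibre from `d` cannot map to a common successor -/
lemma unique_pred (hND : ¬ 𝒜.HasDiamond) {d : Q × S} {x : List S} {p₁ p₂ : Q × S} {gq : Q}
    (h₁ : p₁ ∈ fibRun 𝒜 D {d} x) (h₂ : p₂ ∈ fibRun 𝒜 D {d} x) (hp2 : p₁.2 = p₂.2)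
    (e₁ : gq ∈ 𝒜.delta p₁.1 p₁.2) (e₂ : gq ∈ 𝒜.delta p₂.1 p₂.2) : p₁ = p₂ := by
  by_contra hne
  obtain ⟨ρ₁, hρ₁⟩ := run_of_mem_fibRun 𝒜 D h₁
  obtain ⟨ρ₂, hρ₂⟩ := run_of_mem_fibRun 𝒜 D h₂
  have r₁ := isRun_snoc 𝒜 hρ₁ e₁
  have r₂ := isRun_snoc 𝒜 hρ₂ e₂
  rw [hp2] at r₁
  refine hND ⟨d.1, gq, (d.2 :: x).dropLast ++ [p₂.2], _, _, ?_, r₁, r₂⟩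
  intro heq
  have hlen : ((d.1 :: ρ₁).dropLast).length = ((d.1 :: ρ₂).dropLast).length := by
    rw [List.length_dropLast, List.length_dropLast, isRun_length 𝒜 hρ₁, isRun_length 𝒜 hρ₂]
  have := List.append_inj_right heq hlen
  have h11 : p₁.1 = p₂.1 := by
    injection this with h _
  exact hne (Prod.ext h11 hp2)

/-- disjointness of fibres from co-reachable distinct states (no diamonds) -/
lemma fib_disjoint (hND : ¬ 𝒜.HasDiamond) {d e : Q × S} {v w : List S}
    (hv1 : d ∈ fibRun 𝒜 D {d} v) (hv2 : e ∈ fibRun 𝒜 D {d} v) (hne : e ≠ d) :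
    fibRun 𝒜 D {d} w ∩ fibRun 𝒜 D {e} w = ∅ := by
  have hsnd : ∀ q ∈ ({d} : Set (Q × S)), (q : Q × S).2 = d.2 := by rintro q rfl; rfl
  have hd2 : d.2 = v.getLastD d.2 := snd_of_mem_fibRun 𝒜 D hsnd hv1
  have he2 : e.2 = v.getLastD d.2 := snd_of_mem_fibRun 𝒜 D hsnd hv2
  have hee : e.2 = d.2 := he2.trans hd2.symm
  ext p
  simp only [Set.mem_inter_iff, Set.mem_empty_iff_false, iff_false]
  rintro ⟨hpd, hpe⟩
  obtain ⟨ρ₁, hρ₁⟩ := run_of_mem_fibRun 𝒜 D hv1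
  obtain ⟨ρ₂, hρ₂⟩ := run_of_mem_fibRun 𝒜 D hv2
  obtain ⟨σ₁, hσ₁⟩ := run_of_mem_fibRun 𝒜 D hpd
  obtain ⟨σ₂, hσ₂⟩ := run_of_mem_fibRun 𝒜 D hpe
  rw [hee] at hσ₂
  have r₁ := isRun_append 𝒜 hρ₁ hσ₁
  have r₂ := isRun_append 𝒜 hρ₂ hσ₂
  refine hND ⟨d.1, p.1, (d.2 :: v).dropLast ++ (d.2 :: w).dropLast, _, _, ?_, r₁, r₂⟩
  intro heq
  have hlen : ((d.1 :: ρ₁).dropLast).length = ((d.1 :: ρ₂).dropLast).length := by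
    rw [List.length_dropLast, List.length_dropLast, isRun_length 𝒜 hρ₁, isRun_length 𝒜 hρ₂]
  have := List.append_inj_right heq hlen
  have h11 : d.1 = e.1 := by injection this
  exact hne (Prod.ext h11.symm hee)

end Runs
section WtPad
variable {S : Type} [Fintype S]

/-- weight of a word -/
noncomputable def wt (M : Matrix S S ℝ) : S → List S → ℝ
  | _, [] => 1
  | s, t :: l => M s t * wt M t l

variable {M : Matrix S S ℝ}

lemma wt_nonneg (hM : IsMarkov M) (s : S) (l : List S) : 0 ≤ wt M s l := by
  induction l generalizing s with
  | nil => norm_num [wt]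
  | cons t l ih => exact mul_nonneg (hM.1 s t) (ih t)

lemma M_le_one (hM : IsMarkov M) (s t : S) : M s t ≤ 1 := by
  calc M s t ≤ ∑ u, M s u := Finset.single_le_sum (fun u _ => hM.1 s u) (Finset.mem_univ t)
  _ = 1 := hM.2 s

lemma wt_le_one (hM : IsMarkov M) (s : S) (l : List S) : wt M s l ≤ 1 := by
  induction l generalizing s with
  | nil => norm_num [wt]
  | cons t l ih =>
    calc M s t * wt M t l ≤ 1 * 1 :=
      mul_le_mul (M_le_one hM s t) (ih t) (wt_nonneg hM t l) zero_le_one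
    _ = 1 := by ring

lemma wt_pos (hM : IsMarkov M) {s : S} {l : List S} (h : Enabled M (s :: l)) :
    0 < wt M s l := by
  induction l generalizing s with
  | nil => norm_num [wt]
  | cons t l ih =>
    unfold Enabled at h
    simp only [List.Chain', List.isChain_cons_cons] at h
    exact mul_pos h.1 (ih h.2)

lemma wt_append (s : S) (l₁ l₂ : List S) :
    wt M s (l₁ ++ l₂) = wt M s l₁ * wt M (l₁.getLastD s) l₂ := by
  induction l₁ generalizing s with
  | nil => simp [wt]
  | cons t l ih =>
    rw [List.cons_append, List.getLastD_cons]
    show M s t * wt M t (l ++ l₂) = M s t * wt M t l * wt M (l.getLastD t) l₂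
    rw [ih t]
    ring

lemma exists_succ_pos (hM : IsMarkov M) (s : S) : ∃ t, 0 < M s t := by
  by_contra h
  push_neg at h
  have : ∑ t, M s t = 0 := Finset.sum_eq_zero fun t _ => le_antisymm (h t) (hM.1 s t)
  rw [hM.2 s] at this
  norm_num at this

/-- canonical positive-probability successor -/
noncomputable def nxt (M : Matrix S S ℝ) (s : S) : S :=
  if h : ∃ t, 0 < M s t then h.choose else s

lemma nxt_pos (hM : IsMarkov M) (s : S) : 0 < M s (nxt M s) := by
  rw [nxt, dif_pos (exists_succ_pos hM s)]
  exact (exists_succ_pos hM s).choose_spec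

/-- padding word of a given length, always enabled -/
noncomputable def pad (M : Matrix S S ℝ) : S → ℕ → List S
  | _, 0 => []
  | s, n + 1 => nxt M s :: pad M (nxt M s) n

lemma pad_length (s : S) (n : ℕ) : (pad M s n).length = n := by
  induction n generalizing s with
  | zero => rfl
  | succ n ih => simp [pad, ih]

lemma pad_enabled (hM : IsMarkov M) (s : S) (n : ℕ) : Enabled M (s :: pad M s n) := by
  induction n generalizing s with
  | zero => exact List.isChain_singleton s
  | succ n ih =>
    show List.Chain' _ (s :: nxt M s :: pad M (nxt M s) n)
    exact List.isChain_cons_cons.2 ⟨nxt_pos hM s, ih (nxt M s)⟩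

end WtPad

section SCC
variable {Q S : Type} [Fintype Q] [Fintype S]
variable (𝒜 : BA Q S) (M : Matrix S S ℝ) (D : Set (Q × S))

lemma Bmat_pos_iff {p p' : Q × S} :
    0 < Bmat 𝒜 M p p' ↔ (p'.1 ∈ 𝒜.delta p.1 p.2 ∧ 0 < M p.2 p'.2) := by
  show 0 < (if p'.1 ∈ 𝒜.delta p.1 p.2 then M p.2 p'.2 else 0) ↔ _
  by_cases h : p'.1 ∈ 𝒜.delta p.1 p.2 <;> simp [h]

lemma chain_rtg_prefix {α : Type*} {r : α → α → Prop} :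
    ∀ {l : List α} {a : α}, List.Chain r a l → ∀ p ∈ l, Relation.ReflTransGen r a p := by
  intro l
  induction l with
  | nil => intro a _ p hp; exact absurd hp (List.not_mem_nil (a := p))
  | cons b l ih =>
    intro a hc p hp
    simp only [List.Chain, List.isChain_cons_cons] at hc
    rw [List.mem_cons] at hp
    rcases hp with rfl | hp
    · exact Relation.ReflTransGen.single hc.1
    · exact (Relation.ReflTransGen.single hc.1).trans (ih hc.2 p hp)

lemma chain_rtg_suffix {α : Type*} {r : α → α → Prop} :
    ∀ {l : List α} {a : α}, List.Chain r a l → ∀ p ∈ a :: l,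
      Relation.ReflTransGen r p ((a :: l).getLast (List.cons_ne_nil _ _)) := by
  intro l
  induction l with
  | nil =>
    intro a _ p hp
    rw [List.mem_cons] at hp
    rcases hp with rfl | hp
    · exact Relation.ReflTransGen.refl
    · exact absurd hp (List.not_mem_nil (a := p))
  | cons b l ih =>
    intro a hc p hp
    simp only [List.Chain, List.isChain_cons_cons] at hc
    rw [List.getLast_cons_cons]
    rw [List.mem_cons] at hp
    rcases hp with rfl | hp
    · exact ((Relation.ReflTransGen.single hc.1).trans
        (ih hc.2 b (List.mem_cons_self)))
    · exact ih hc.2 p hp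

lemma scc_path (hD : IsSCC (Bmat 𝒜 M) D) {e f : Q × S} (he : e ∈ D) (hf : f ∈ D) :
    ∃ l : List (Q × S), List.Chain (fun a b => 0 < Bmat 𝒜 M a b) e l ∧
      (e :: l).getLast (List.cons_ne_nil _ _) = f ∧ ∀ p ∈ l, p ∈ D := by
  obtain ⟨v₀, rfl⟩ := hD
  obtain ⟨l, hc, hl⟩ := List.exists_isChain_cons_of_relationReflTransGen (he.2.trans hf.1)
  refine ⟨l, hc, hl, fun p hp => ?_⟩
  constructor
  · exact he.1.trans (chain_rtg_prefix hc p hp)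
  · have := chain_rtg_suffix hc p (List.mem_cons_of_mem _ hp)
    rw [hl] at this
    exact this.trans hf.2

/-- a word path between two states of `D` -/
lemma word_path (hD : IsSCC (Bmat 𝒜 M) D) {e f : Q × S} (he : e ∈ D) (hf : f ∈ D) :
    ∃ x : List S, Enabled M (e.2 :: x) ∧ f ∈ fibRun 𝒜 D {e} x ∧
      x.getLastD e.2 = f.2 := by
  obtain ⟨l, hc, hl, hmem⟩ := scc_path 𝒜 M D hD he hf
  clear hD
  induction l generalizing e with
  | nil =>
    cases hl
    exact ⟨[], List.isChain_singleton _, rfl, rfl⟩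
  | cons b l ih =>
    simp only [List.Chain, List.isChain_cons_cons] at hc
    have hb : b ∈ D := hmem b (List.mem_cons_self)
    have hpos := (Bmat_pos_iff 𝒜 M).1 hc.1
    rw [List.getLast_cons_cons] at hl
    obtain ⟨x', hen', hf', hlast'⟩ := ih hb hc.2 hl (fun p hp => hmem p (List.mem_cons_of_mem _ hp))
    refine ⟨b.2 :: x', List.isChain_cons_cons.2 ⟨hpos.2, hen'⟩, ?_, ?_⟩
    · show f ∈ fibRun 𝒜 D (fibStep 𝒜 D {e} b.2) x'
      refine fibRun_mono 𝒜 D ?_ x' hf'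
      rintro q rfl
      exact ⟨hb, rfl, e, rfl, hpos.1⟩
    · rw [List.getLastD_cons]
      exact hlast'

end SCC
section Surv
variable {Q S : Type} [Fintype Q] [Fintype S]

/-- survival weight of a fibre after `n` steps -/
noncomputable def surv (𝒜 : BA Q S) (M : Matrix S S ℝ) (D : Set (Q × S)) :
    ℕ → S → Set (Q × S) → ℝ
  | 0, _, R => if R = ∅ then 0 else 1
  | n + 1, s, R => ∑ t, M s t * surv 𝒜 M D n t (fibStep 𝒜 D R t)

variable {𝒜 : BA Q S} {M : Matrix S S ℝ} {D : Set (Q × S)}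

lemma surv_nonneg (hM : IsMarkov M) : ∀ (n : ℕ) (s : S) (R : Set (Q × S)),
    0 ≤ surv 𝒜 M D n s R := by
  intro n
  induction n with
  | zero => intro s R; rw [surv]; positivity
  | succ n ih =>
    intro s R
    rw [surv]
    exact Finset.sum_nonneg fun t _ => mul_nonneg (hM.1 s t) (ih t _)

lemma surv_le_one (hM : IsMarkov M) : ∀ (n : ℕ) (s : S) (R : Set (Q × S)),
    surv 𝒜 M D n s R ≤ 1 := by
  intro n
  induction n with
  | zero => intro s R; rw [surv]; split <;> norm_num
  | succ n ih =>
    intro s R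
    rw [surv]
    calc ∑ t, M s t * surv 𝒜 M D n t (fibStep 𝒜 D R t)
        ≤ ∑ t, M s t * 1 :=
          Finset.sum_le_sum fun t _ => mul_le_mul_of_nonneg_left (ih t _) (hM.1 s t)
      _ = 1 := by simp [hM.2 s]

lemma surv_empty : ∀ (n : ℕ) (s : S), surv 𝒜 M D n s ∅ = 0 := by
  intro n
  induction n with
  | zero => intro s; rw [surv, if_pos rfl]
  | succ n ih =>
    intro s
    rw [surv]
    refine Finset.sum_eq_zero fun t _ => ?_
    rw [fibStep_empty, ih t, mul_zero]

end Surv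
section Link
variable {Q S : Type} [Fintype Q] [Fintype S]
variable {𝒜 : BA Q S} {M : Matrix S S ℝ} {D : Set (Q × S)}

lemma BD_apply (p g : ↥D) : subMat (Bmat 𝒜 M) D p g =
    (if ((g : Q × S)).1 ∈ 𝒜.delta (p : Q × S).1 (p : Q × S).2
      then M (p : Q × S).2 (g : Q × S).2 else 0) := rfl

lemma BD_nonneg (hM : IsMarkov M) (p g : ↥D) : 0 ≤ subMat (Bmat 𝒜 M) D p g := by
  rw [BD_apply]
  split
  · exact hM.1 _ _
  · exact le_refl 0

lemma BDpow_nonneg (hM : IsMarkov M) : ∀ (n : ℕ) (p g : ↥D),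
    0 ≤ (subMat (Bmat 𝒜 M) D ^ n) p g := by
  intro n
  induction n with
  | zero =>
    intro p g
    rw [pow_zero]
    by_cases h : p = g
    · rw [h, Matrix.one_apply_eq]; norm_num
    · rw [Matrix.one_apply_ne h]
  | succ n ih =>
    intro p g
    rw [pow_succ', Matrix.mul_apply]
    exact Finset.sum_nonneg fun q _ => mul_nonneg (BD_nonneg hM p q) (ih q g)

lemma link (hM : IsMarkov M) (hND : ¬ 𝒜.HasDiamond) {d : Q × S} (hd : d ∈ D) :
    ∀ (n : ℕ) (x : List S) (f : ↥D),
    (∑ p : ↥D, (if (p : Q × S) ∈ fibRun 𝒜 D {d} x then (1:ℝ) else 0) *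
        (subMat (Bmat 𝒜 M) D ^ n) p f)
      ≤ surv 𝒜 M D n (x.getLastD d.2) (fibRun 𝒜 D {d} x) := by
  intro n
  induction n with
  | zero =>
    intro x f
    rw [surv, pow_zero]
    rcases eq_or_ne (fibRun 𝒜 D {d} x) ∅ with hR | hR
    · rw [if_pos hR, hR]
      simp
    · rw [if_neg hR]
      rw [Finset.sum_eq_single f]
      · split
        · rw [Matrix.one_apply_eq]; norm_num
        · rw [zero_mul]; norm_num
      · intro p _ hpf
        rw [Matrix.one_apply_ne hpf, mul_zero]
      · intro h
        exact absurd (Finset.mem_univ f) h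
  | succ n ih =>
    intro x f
    set s := x.getLastD d.2 with hs
    set R := fibRun 𝒜 D {d} x with hR
    have hfib : ∀ q ∈ R, (q : Q × S).2 = s := by
      intro q hq
      exact snd_of_mem_fibRun 𝒜 D (by rintro q' rfl; rfl) hq
    have hRD : ∀ q ∈ R, q ∈ D := fun q hq =>
      mem_D_of_mem_fibRun 𝒜 D (by rintro q' rfl; exact hd) hq
    -- expand the (n+1)-power
    have expand : ∀ p : ↥D, (subMat (Bmat 𝒜 M) D ^ (n+1)) p f
        = ∑ g : ↥D, subMat (Bmat 𝒜 M) D p g * (subMat (Bmat 𝒜 M) D ^ n) g f := by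
      intro p
      rw [pow_succ', Matrix.mul_apply]
    calc (∑ p : ↥D, (if (p : Q × S) ∈ R then (1:ℝ) else 0) *
            (subMat (Bmat 𝒜 M) D ^ (n+1)) p f)
        = ∑ g : ↥D, (∑ p : ↥D, (if (p : Q × S) ∈ R then (1:ℝ) else 0) *
            subMat (Bmat 𝒜 M) D p g) * (subMat (Bmat 𝒜 M) D ^ n) g f := by
          simp_rw [expand, Finset.mul_sum, Finset.sum_mul]
          rw [Finset.sum_comm]
          simp_rw [mul_assoc]
      _ ≤ ∑ g : ↥D, (M s (g : Q × S).2 *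
            (if (g : Q × S) ∈ fibStep 𝒜 D R (g : Q × S).2 then (1:ℝ) else 0)) *
            (subMat (Bmat 𝒜 M) D ^ n) g f := by
          refine Finset.sum_le_sum fun g _ => ?_
          refine mul_le_mul_of_nonneg_right ?_ (BDpow_nonneg hM n g f)
          -- claim1
          by_cases hg : (g : Q × S) ∈ fibStep 𝒜 D R (g : Q × S).2
          · rw [if_pos hg, mul_one]
            obtain ⟨hgD, -, p₀, hp₀R, hδ₀⟩ := hg
            have hp₀D : p₀ ∈ D := hRD p₀ hp₀R
            rw [Finset.sum_eq_single (⟨p₀, hp₀D⟩ : ↥D)]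
            · rw [if_pos hp₀R, one_mul, BD_apply, if_pos hδ₀]
              rw [hfib p₀ hp₀R]
            · intro p _ hpne
              split
              · rename_i hpR
                rw [one_mul, BD_apply]
                split
                · rename_i hδ
                  exfalso
                  refine hpne (Subtype.ext ?_)
                  exact unique_pred 𝒜 D hND hpR hp₀R
                    ((hfib _ hpR).trans (hfib _ hp₀R).symm) hδ hδ₀
                · rfl
              · rw [zero_mul]
            · intro h; exact absurd (Finset.mem_univ _) h
          · rw [if_neg hg, mul_zero]
            refine le_of_eq (Finset.sum_eq_zero fun p _ => ?_)
            split
            · rename_i hpR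
              rw [one_mul, BD_apply]
              split
              · rename_i hδ
                exact absurd ⟨g.2, rfl, p, hpR, hδ⟩ hg
              · rfl
            · rw [zero_mul]
      _ = ∑ t, M s t * (∑ g : ↥D,
            (if (g : Q × S) ∈ fibStep 𝒜 D R t then (1:ℝ) else 0) *
            (subMat (Bmat 𝒜 M) D ^ n) g f) := by
          simp_rw [Finset.mul_sum]
          rw [Finset.sum_comm]
          refine Finset.sum_congr rfl fun g _ => ?_
          rw [Finset.sum_eq_single ((g : Q × S).2)]
          · ring
          · intro t _ htne
            have : (g : Q × S) ∉ fibStep 𝒜 D R t := fun hmem => htne (hmem.2.1 ▸ rfl)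
            rw [if_neg this]
            ring
          · intro h; exact absurd (Finset.mem_univ _) h
      _ ≤ ∑ t, M s t * surv 𝒜 M D n t (fibStep 𝒜 D R t) := by
          refine Finset.sum_le_sum fun t _ => ?_
          refine mul_le_mul_of_nonneg_left ?_ (hM.1 s t)
          have hstep : fibRun 𝒜 D {d} (x ++ [t]) = fibStep 𝒜 D R t := by
            rw [fibRun_append]; rfl
          have hlast : (x ++ [t]).getLastD d.2 = t := by
            rw [getLastD_append]; rfl
          calc (∑ g : ↥D, (if (g : Q × S) ∈ fibStep 𝒜 D R t then (1:ℝ) else 0) *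
                (subMat (Bmat 𝒜 M) D ^ n) g f)
              = ∑ g : ↥D, (if (g : Q × S) ∈ fibRun 𝒜 D {d} (x ++ [t]) then (1:ℝ) else 0) *
                (subMat (Bmat 𝒜 M) D ^ n) g f := by rw [hstep]
            _ ≤ surv 𝒜 M D n ((x ++ [t]).getLastD d.2) (fibRun 𝒜 D {d} (x ++ [t])) := ih _ f
            _ = surv 𝒜 M D n t (fibStep 𝒜 D R t) := by rw [hlast, hstep]
      _ = surv 𝒜 M D (n+1) s R := by rw [surv]

end Link
section Decay
variable {Q S : Type} [Fintype Q] [Fintype S]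
variable {𝒜 : BA Q S} {M : Matrix S S ℝ} {D : Set (Q × S)}

lemma decay (hM : IsMarkov M) (hD : IsSCC (Bmat 𝒜 M) D)
    {d : Q × S} (hd : d ∈ D) {w u : List S}
    (hwdef : Enabled M (d.2 :: w))
    (huen : Enabled M (w.getLastD d.2 :: u))
    (hu : fibRun 𝒜 D (fibRun 𝒜 D {d} w) u = ∅)
    (hA3 : ∀ v e, e ≠ d → Enabled M (d.2 :: v) → d ∈ fibRun 𝒜 D {d} v →
        e ∈ fibRun 𝒜 D {d} v → fibRun 𝒜 D {e} w = ∅) :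
    ∃ (N : ℕ) (ε : ℝ), 0 < N ∧ 0 < ε ∧ ε ≤ 1 ∧
      ∀ (n : ℕ) (x : List S), Enabled M (d.2 :: x) →
        surv 𝒜 M D n (x.getLastD d.2) (fibRun 𝒜 D {d} x) ≤ (1 - ε) ^ (n / N) := by
  haveI : Nonempty ↥D := ⟨⟨d, hd⟩⟩
  have hsingsub : ({d} : Set (Q × S)) ⊆ D := by rintro q rfl; exact hd
  have hsingfib : ∀ q ∈ ({d} : Set (Q × S)), (q : Q × S).2 = d.2 := by rintro q rfl; rfl
  have hpath : ∀ e : ↥D, ∃ x, Enabled M ((e : Q × S).2 :: x) ∧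
      d ∈ fibRun 𝒜 D {(e : Q × S)} x ∧ x.getLastD (e : Q × S).2 = d.2 :=
    fun e => word_path 𝒜 M D hD e.2 hd
  choose xe hxe_en hxe_d hxe_last using hpath
  set L : ↥D → ℕ := fun e => (xe e).length + w.length + u.length with hL
  set N : ℕ := (Finset.univ.sup L) + 1 with hN
  have hNpos : 0 < N := Nat.succ_pos _
  have hLN : ∀ e, L e < N := fun e =>
    Nat.lt_succ_of_le (Finset.le_sup (Finset.mem_univ e))
  set kil : ↥D → List S := fun e =>
    xe e ++ (w ++ (u ++ pad M (u.getLastD (w.getLastD d.2)) (N - L e))) with hkil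
  have hlen : ∀ e, (kil e).length = N := by
    intro e
    have h1 := hLN e
    simp only [hkil, List.length_append, pad_length]
    simp only [hL] at h1 ⊢
    omega
  have hkil_en : ∀ e : ↥D, Enabled M ((e : Q × S).2 :: kil e) := by
    intro e
    refine enabled_append M (hxe_en e) ?_
    rw [hxe_last e]
    refine enabled_append M hwdef ?_
    refine enabled_append M huen ?_
    exact pad_enabled hM _ _
  have hwt : ∀ e : ↥D, 0 < wt M (e : Q × S).2 (kil e) := fun e => wt_pos hM (hkil_en e)
  set ε : ℝ := Finset.univ.inf' Finset.univ_nonempty (fun e : ↥D => wt M (e : Q × S).2 (kil e))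
    with hε
  have hε_pos : 0 < ε := Finset.lt_inf'_iff _ |>.2 fun e _ => hwt e
  have hε_le1 : ε ≤ 1 := by
    refine le_trans (Finset.inf'_le _ (Finset.mem_univ ⟨d, hd⟩)) ?_
    exact wt_le_one hM _ _
  have hε_kil : ∀ e : ↥D, ε ≤ wt M (e : Q × S).2 (kil e) :=
    fun e => Finset.inf'_le _ (Finset.mem_univ e)
  have h1ε : (0:ℝ) ≤ 1 - ε := by linarith
  have h1ε1 : (1:ℝ) - ε ≤ 1 := by linarith
  -- the kill property
  have hkill : ∀ (x : List S), Enabled M (d.2 :: x) → ∀ e : ↥D,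
      (e : Q × S) ∈ fibRun 𝒜 D {d} x → fibRun 𝒜 D {d} (x ++ kil e) = ∅ := by
    intro x hx e he
    have hsnd : (e : Q × S).2 = x.getLastD d.2 := snd_of_mem_fibRun 𝒜 D hsingfib he
    have hxen : Enabled M (d.2 :: (x ++ xe e)) := by
      refine enabled_append M hx ?_
      rw [← hsnd]
      exact hxe_en e
    have hdR1 : d ∈ fibRun 𝒜 D {d} (x ++ xe e) := by
      rw [fibRun_append]
      exact fibRun_mono 𝒜 D (by rintro q rfl; exact he) _ (hxe_d e)
    have hstepw : fibRun 𝒜 D (fibRun 𝒜 D {d} (x ++ xe e)) w = fibRun 𝒜 D {d} w := by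
      ext p
      rw [mem_fibRun_iff]
      constructor
      · rintro ⟨e', he', hp⟩
        rcases eq_or_ne e' d with rfl | hne
        · exact hp
        · rw [hA3 (x ++ xe e) e' hne hxen hdR1 he'] at hp
          exact absurd hp (Set.notMem_empty p)
      · intro hp
        exact ⟨d, hdR1, hp⟩
    have hassoc : x ++ kil e = (((x ++ xe e) ++ w) ++ u) ++
        pad M (u.getLastD (w.getLastD d.2)) (N - L e) := by
      simp [hkil, List.append_assoc]
    rw [hassoc, fibRun_append, fibRun_append, fibRun_append, fibRun_append,
      ← fibRun_append 𝒜 D {d} x (xe e), hstepw, hu, fibRun_empty]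
  -- main decay
  refine ⟨N, ε, hNpos, hε_pos, hε_le1, ?_⟩
  intro n
  induction n using Nat.strong_induction_on with
  | _ n IH =>
    intro x hx
    rcases eq_or_ne (fibRun 𝒜 D {d} x) ∅ with hR | hR
    · rw [hR, surv_empty]
      positivity
    · by_cases hn : n < N
      · rw [Nat.div_eq_of_lt hn, pow_zero]
        exact surv_le_one hM n _ _
      · push_neg at hn
        obtain ⟨p₀, hp₀⟩ := Set.nonempty_iff_ne_empty.2 hR
        have hp₀D : p₀ ∈ D := mem_D_of_mem_fibRun 𝒜 D hsingsub hp₀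
        set e : ↥D := (⟨p₀, hp₀D⟩ : ↥D) with he_def
        -- inner induction along a killing word
        have inner : ∀ (κ : List S) (m : ℕ), κ.length + m ≤ n → ∀ (xx : List S),
            Enabled M (d.2 :: xx) → Enabled M (xx.getLastD d.2 :: κ) →
            fibRun 𝒜 D {d} (xx ++ κ) = ∅ →
            surv 𝒜 M D (κ.length + m) (xx.getLastD d.2) (fibRun 𝒜 D {d} xx) ≤
              (1 - wt M (xx.getLastD d.2) κ) * (1 - ε) ^ (m / N) := by
          intro κ
          induction κ with
          | nil =>
            intro m _ xx _ _ hkill0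
            rw [List.append_nil] at hkill0
            rw [List.length_nil, zero_add, hkill0, surv_empty]
            show (0:ℝ) ≤ (1 - wt M (xx.getLastD d.2) []) * _
            rw [show wt M (xx.getLastD d.2) [] = 1 from rfl]
            norm_num
          | cons t κ' ihκ =>
            intro m hm xx hxx hκen hkill0
            unfold Enabled at hκen
            simp only [List.Chain', List.isChain_cons_cons] at hκen
            obtain ⟨hMst, hκen'⟩ := hκen
            set s := xx.getLastD d.2 with hs_def
            have hen_t : Enabled M (d.2 :: (xx ++ [t])) :=
              enabled_append M hxx (enabled_pair M hMst)
            have harith : (t :: κ').length + m = (κ'.length + m) + 1 := by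
              simp only [List.length_cons]
              omega
            rw [harith, surv]
            set n' := κ'.length + m with hn'_def
            set X : ℝ := (1 - ε) ^ (m / N) with hX
            have hX0 : 0 ≤ X := pow_nonneg h1ε _
            have hXmono : (1 - ε) ^ (n' / N) ≤ X := by
              refine pow_le_pow_of_le_one h1ε h1ε1 ?_
              exact Nat.div_le_div_right (by omega)
            have hn'n : n' < n := by
              simp only [List.length_cons] at hm
              omega
            have hterm : ∀ t' : S, t' ≠ t →
                M s t' * surv 𝒜 M D n' t' (fibStep 𝒜 D (fibRun 𝒜 D {d} xx) t') ≤
                  M s t' * X := by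
              intro t' _
              rcases eq_or_lt_of_le (hM.1 s t') with h0 | h0
              · rw [← h0, zero_mul, zero_mul]
              · have hen' : Enabled M (d.2 :: (xx ++ [t'])) :=
                  enabled_append M hxx (enabled_pair M h0)
                have hfib' : fibRun 𝒜 D {d} (xx ++ [t']) =
                    fibStep 𝒜 D (fibRun 𝒜 D {d} xx) t' := by
                  rw [fibRun_append]; rfl
                have hlast' : (xx ++ [t']).getLastD d.2 = t' := by
                  rw [getLastD_append]; rfl
                have hIH := IH n' hn'n (xx ++ [t']) hen'
                rw [hfib', hlast'] at hIH
                exact mul_le_mul_of_nonneg_left (hIH.trans hXmono) (hM.1 s t')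
            have htermt :
                M s t * surv 𝒜 M D n' t (fibStep 𝒜 D (fibRun 𝒜 D {d} xx) t) ≤
                  M s t * ((1 - wt M t κ') * X) := by
              refine mul_le_mul_of_nonneg_left ?_ (hM.1 s t)
              have hfib' : fibRun 𝒜 D {d} (xx ++ [t]) =
                  fibStep 𝒜 D (fibRun 𝒜 D {d} xx) t := by
                rw [fibRun_append]; rfl
              have hlast' : (xx ++ [t]).getLastD d.2 = t := by
                rw [getLastD_append]; rfl
              have hκen'' : Enabled M ((xx ++ [t]).getLastD d.2 :: κ') := by
                rw [hlast']
                exact hκen'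
              have hkill' : fibRun 𝒜 D {d} ((xx ++ [t]) ++ κ') = ∅ := by
                rw [List.append_assoc]
                exact hkill0
              have hit := ihκ m (by simp only [List.length_cons] at hm; omega)
                (xx ++ [t]) hen_t hκen'' hkill'
              rw [hfib', hlast'] at hit
              exact hit
            calc (∑ t', M s t' * surv 𝒜 M D n' t'
                    (fibStep 𝒜 D (fibRun 𝒜 D {d} xx) t'))
                ≤ ∑ t', (if t' = t then M s t * ((1 - wt M t κ') * X) else M s t' * X) := by
                  refine Finset.sum_le_sum fun t' _ => ?_
                  split
                  · rename_i h; subst h; exact htermt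
                  · rename_i h; exact hterm t' h
              _ = (1 - wt M s (t :: κ')) * X := by
                  rw [← Finset.add_sum_erase _ _ (Finset.mem_univ t), if_pos rfl]
                  have hrest : (∑ t' ∈ Finset.univ.erase t,
                      (if t' = t then M s t * ((1 - wt M t κ') * X) else M s t' * X))
                      = ∑ t' ∈ Finset.univ.erase t, M s t' * X :=
                    Finset.sum_congr rfl fun t' ht' => by
                      rw [if_neg (Finset.ne_of_mem_erase ht')]
                  rw [hrest, ← Finset.sum_mul]
                  have hsum1 : (∑ t' ∈ Finset.univ.erase t, M s t') = 1 - M s t := by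
                    have h2 := Finset.add_sum_erase Finset.univ (fun t' => M s t')
                      (Finset.mem_univ t)
                    rw [hM.2 s] at h2
                    linarith
                  rw [hsum1]
                  have hwtc : wt M s (t :: κ') = M s t * wt M t κ' := rfl
                  rw [hwtc]
                  ring
        -- apply the inner lemma with the killing word of e
        have hsnd₀ : p₀.2 = x.getLastD d.2 := snd_of_mem_fibRun 𝒜 D hsingfib hp₀
        have hbud : (kil e).length + (n - N) ≤ n := by
          rw [hlen e]
          omega
        have hκen : Enabled M (x.getLastD d.2 :: kil e) := by
          have := hkil_en e
          rw [he_def] at this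
          rw [← hsnd₀]
          exact this
        have key := inner (kil e) (n - N) hbud x hx hκen (hkill x hx e hp₀)
        rw [hlen e, Nat.add_sub_cancel' hn] at key
        calc surv 𝒜 M D n (x.getLastD d.2) (fibRun 𝒜 D {d} x)
            ≤ (1 - wt M (x.getLastD d.2) (kil e)) * (1 - ε) ^ ((n - N) / N) := key
          _ ≤ (1 - ε) * (1 - ε) ^ ((n - N) / N) := by
              refine mul_le_mul_of_nonneg_right ?_ (pow_nonneg h1ε _)
              have h3 := hε_kil e
              rw [he_def] at h3
              rw [← hsnd₀]
              linarith
          _ = (1 - ε) ^ ((n - N) / N + 1) := (pow_succ' _ _).symm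
          _ = (1 - ε) ^ (n / N) := by
              congr 1
              rw [← Nat.add_div_right (n - N) hNpos, Nat.sub_add_cancel hn]

end Decay
section Spectral
variable {Q S : Type} [Fintype Q] [Fintype S]
variable {𝒜 : BA Q S} {M : Matrix S S ℝ} {D : Set (Q × S)}

lemma pow_pos_of_path (hM : IsMarkov M) (hD : IsSCC (Bmat 𝒜 M) D) (a b : ↥D) :
    ∃ k, 0 < (subMat (Bmat 𝒜 M) D ^ k) a b := by
  obtain ⟨l, hc, hl, hmem⟩ := scc_path 𝒜 M D hD a.2 b.2
  clear hD
  induction l generalizing a with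
  | nil =>
    refine ⟨0, ?_⟩
    have hab : a = b := Subtype.ext hl
    rw [pow_zero, hab, Matrix.one_apply_eq]
    norm_num
  | cons c l ih =>
    simp only [List.Chain, List.isChain_cons_cons] at hc
    have hcD : c ∈ D := hmem c (List.mem_cons_self)
    rw [List.getLast_cons_cons] at hl
    obtain ⟨k, hk⟩ := ih ⟨c, hcD⟩ hc.2 hl (fun p hp => hmem p (List.mem_cons_of_mem _ hp))
    refine ⟨k + 1, ?_⟩
    rw [pow_succ', Matrix.mul_apply]
    refine Finset.sum_pos' (fun q _ => mul_nonneg (BD_nonneg hM a q) (BDpow_nonneg hM k q b))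
      ⟨⟨c, hcD⟩, Finset.mem_univ _, ?_⟩
    exact mul_pos (show (0:ℝ) < subMat (Bmat 𝒜 M) D a ⟨c, hcD⟩ from hc.1) hk

lemma spectral_contradiction (hM : IsMarkov M) (hND : ¬ 𝒜.HasDiamond)
    (hD : IsSCC (Bmat 𝒜 M) D) {d : Q × S} (hd : d ∈ D) {w u : List S}
    (hwdef : Enabled M (d.2 :: w))
    (huen : Enabled M (w.getLastD d.2 :: u))
    (hu : fibRun 𝒜 D (fibRun 𝒜 D {d} w) u = ∅)
    (hA3 : ∀ v e, e ≠ d → Enabled M (d.2 :: v) → d ∈ fibRun 𝒜 D {d} v →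
        e ∈ fibRun 𝒜 D {d} v → fibRun 𝒜 D {e} w = ∅)
    (hrec : specRad (subMat (Bmat 𝒜 M) D) = 1) : False := by
  haveI : Nonempty ↥D := ⟨⟨d, hd⟩⟩
  set dI : ↥D := ⟨d, hd⟩ with hdI
  obtain ⟨N, ε, hNpos, hεpos, hεle, hdecay⟩ := decay hM hD hd hwdef huen hu hA3
  have h1ε : (0:ℝ) ≤ 1 - ε := by linarith
  have h1ε1 : (1:ℝ) - ε < 1 := by linarith
  -- row-d decay for matrix powers
  have hfinal : ∀ (n : ℕ) (f : ↥D), (subMat (Bmat 𝒜 M) D ^ n) dI f ≤ (1 - ε) ^ (n / N) := by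
    intro n f
    have hlink := link hM hND hd n [] f
    have hsum : (∑ p : ↥D, (if (p : Q × S) ∈ fibRun 𝒜 D {d} [] then (1:ℝ) else 0) *
        (subMat (Bmat 𝒜 M) D ^ n) p f) = (subMat (Bmat 𝒜 M) D ^ n) dI f := by
      rw [Finset.sum_eq_single dI]
      · rw [if_pos (show ((dI : Q × S)) ∈ fibRun 𝒜 D {d} [] from rfl), one_mul]
      · intro p _ hpne
        have : (p : Q × S) ∉ fibRun 𝒜 D {d} [] := fun hmem => hpne (Subtype.ext hmem)
        rw [if_neg this, zero_mul]
      · intro h; exact absurd (Finset.mem_univ _) h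
    rw [hsum] at hlink
    exact hlink.trans (hdecay n [] (List.isChain_singleton _))
  -- entry-wise decay via the sandwich, with an eigenvalue of modulus one: contradiction
  unfold specRad at hrec
  set A := (subMat (Bmat 𝒜 M) D).map Complex.ofReal with hA
  have h𝔖 : {x : ℝ | ∃ c ∈ spectrum ℂ A, x = ‖c‖} =
      (fun c => ‖c‖) '' (spectrum ℂ A) := by
    ext x
    simp only [Set.mem_setOf_eq, Set.mem_image]
    constructor
    · rintro ⟨c, hc, rfl⟩; exact ⟨c, hc, rfl⟩
    · rintro ⟨c, hc, rfl⟩; exact ⟨c, hc, rfl⟩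
  have hfin : ({x : ℝ | ∃ c ∈ spectrum ℂ A, x = ‖c‖}).Finite := by
    rw [h𝔖]
    exact (Matrix.finite_spectrum A).image _
  have hne : ({x : ℝ | ∃ c ∈ spectrum ℂ A, x = ‖c‖}).Nonempty := by
    obtain ⟨c, hc⟩ := spectrum.nonempty_of_isAlgClosed_of_finiteDimensional ℂ A
    exact ⟨‖c‖, c, hc, rfl⟩
  have hmem1 := hne.csSup_mem hfin
  rw [hrec] at hmem1
  obtain ⟨c, hcspec, hcabs⟩ := hmem1
  -- eigenvector for c
  have hnotunit : ¬ IsUnit (algebraMap ℂ (Matrix ↥D ↥D ℂ) c - A) := spectrum.mem_iff.1 hcspec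
  have hdet : (algebraMap ℂ (Matrix ↥D ↥D ℂ) c - A).det = 0 := by
    by_contra h
    exact hnotunit ((Matrix.isUnit_iff_isUnit_det _).2 (isUnit_iff_ne_zero.2 h))
  obtain ⟨v, hv0, hveq⟩ := Matrix.exists_mulVec_eq_zero_iff.2 hdet
  have heig : A.mulVec v = c • v := by
    have hexp : (algebraMap ℂ (Matrix ↥D ↥D ℂ) c - A).mulVec v = c • v - A.mulVec v := by
      rw [Matrix.sub_mulVec]
      congr 1
      rw [Algebra.algebraMap_eq_smul_one, Matrix.smul_mulVec, Matrix.one_mulVec]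
    rw [hexp] at hveq
    have := sub_eq_zero.1 hveq
    exact this.symm
  have heign : ∀ n : ℕ, (A ^ n).mulVec v = c ^ n • v := by
    intro n
    induction n with
    | zero => rw [pow_zero, pow_zero, Matrix.one_mulVec, one_smul]
    | succ n ih =>
      rw [pow_succ', pow_succ', ← Matrix.mulVec_mulVec, ih, Matrix.mulVec_smul, heig,
        smul_smul, mul_comm]
  have hmap : ∀ n : ℕ, A ^ n = ((subMat (Bmat 𝒜 M) D) ^ n).map Complex.ofReal := by
    intro n
    induction n with
    | zero =>
      rw [pow_zero, pow_zero]
      exact (Matrix.map_one _ Complex.ofReal_zero Complex.ofReal_one).symm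
    | succ n ih =>
      rw [pow_succ, pow_succ, ih, hA]
      exact (Matrix.map_mul (f := Complex.ofRealHom)).symm
  -- maximal coordinate
  obtain ⟨g₀, -, hg₀⟩ := Finset.exists_max_image Finset.univ (fun g => ‖v g‖)
    Finset.univ_nonempty
  set m : ℝ := ‖v g₀‖ with hm
  have hmpos : 0 < m := by
    have : v ≠ 0 := hv0
    rw [Function.ne_iff] at this
    obtain ⟨g₁, hg₁⟩ := this
    have h1 : 0 < ‖v g₁‖ := norm_pos_iff.mpr hg₁
    exact h1.trans_le (hg₀ g₁ (Finset.mem_univ _))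
  -- sandwich constants
  obtain ⟨a, ha⟩ := pow_pos_of_path hM hD dI g₀
  choose b hb using fun h : ↥D => pow_pos_of_path hM hD h dI
  set c0 : ↥D → ℝ := fun h => (subMat (Bmat 𝒜 M) D ^ a) dI g₀ * (subMat (Bmat 𝒜 M) D ^ b h) h dI
    with hc0
  have hc0pos : ∀ h, 0 < c0 h := fun h => mul_pos ha (hb h)
  have hsand : ∀ (n : ℕ) (h : ↥D),
      (subMat (Bmat 𝒜 M) D ^ n) g₀ h * c0 h ≤ (subMat (Bmat 𝒜 M) D ^ (a + n + b h)) dI dI := by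
    intro n h
    have hsplit : subMat (Bmat 𝒜 M) D ^ (a + n + b h) =
        subMat (Bmat 𝒜 M) D ^ a * (subMat (Bmat 𝒜 M) D ^ n * subMat (Bmat 𝒜 M) D ^ b h) := by
      rw [add_assoc, pow_add, pow_add]
    rw [hsplit, Matrix.mul_apply]
    have hstep1 : (subMat (Bmat 𝒜 M) D ^ a) dI g₀ *
        ((subMat (Bmat 𝒜 M) D ^ n) g₀ h * (subMat (Bmat 𝒜 M) D ^ b h) h dI) ≤
        (subMat (Bmat 𝒜 M) D ^ a) dI g₀ *
        ((subMat (Bmat 𝒜 M) D ^ n * subMat (Bmat 𝒜 M) D ^ b h) g₀ dI) := by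
      refine mul_le_mul_of_nonneg_left ?_ (BDpow_nonneg hM a dI g₀)
      rw [Matrix.mul_apply]
      exact Finset.single_le_sum
        (f := fun r => (subMat (Bmat 𝒜 M) D ^ n) g₀ r * (subMat (Bmat 𝒜 M) D ^ b h) r dI)
        (fun r _ => mul_nonneg (BDpow_nonneg hM n g₀ r) (BDpow_nonneg hM (b h) r dI))
        (Finset.mem_univ h)
    calc (subMat (Bmat 𝒜 M) D ^ n) g₀ h * c0 h
        = (subMat (Bmat 𝒜 M) D ^ a) dI g₀ *
          ((subMat (Bmat 𝒜 M) D ^ n) g₀ h * (subMat (Bmat 𝒜 M) D ^ b h) h dI) := by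
          rw [hc0]; ring
      _ ≤ (subMat (Bmat 𝒜 M) D ^ a) dI g₀ *
          ((subMat (Bmat 𝒜 M) D ^ n * subMat (Bmat 𝒜 M) D ^ b h) g₀ dI) := hstep1
      _ ≤ ∑ q : ↥D, (subMat (Bmat 𝒜 M) D ^ a) dI q *
          (subMat (Bmat 𝒜 M) D ^ n * subMat (Bmat 𝒜 M) D ^ b h) q dI := by
          refine Finset.single_le_sum
            (f := fun q => (subMat (Bmat 𝒜 M) D ^ a) dI q *
              (subMat (Bmat 𝒜 M) D ^ n * subMat (Bmat 𝒜 M) D ^ b h) q dI)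
            (fun q _ => mul_nonneg (BDpow_nonneg hM a dI q) ?_) (Finset.mem_univ g₀)
          rw [← pow_add]
          exact BDpow_nonneg hM (n + b h) q dI
  have hentry : ∀ (n : ℕ) (h : ↥D),
      (subMat (Bmat 𝒜 M) D ^ n) g₀ h ≤ (1 / c0 h) * (1 - ε) ^ (n / N) := by
    intro n h
    have h1 := (hsand n h).trans (hfinal (a + n + b h) dI)
    have h2 : (1 - ε) ^ ((a + n + b h) / N) ≤ (1 - ε) ^ (n / N) :=
      pow_le_pow_of_le_one h1ε h1ε1.le (Nat.div_le_div_right (by omega))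
    rw [← le_div_iff₀ (hc0pos h)] at h1
    calc (subMat (Bmat 𝒜 M) D ^ n) g₀ h ≤ (1 - ε) ^ ((a + n + b h) / N) / c0 h := h1
      _ ≤ (1 / c0 h) * (1 - ε) ^ (n / N) := by
          rw [div_eq_mul_one_div, mul_comm]
          exact mul_le_mul_of_nonneg_left h2 (one_div_pos.2 (hc0pos h)).le
  -- the key inequality m ≤ K * (1-ε)^(n/N) * m
  set K : ℝ := ∑ h : ↥D, (1 / c0 h) with hK
  have hKpos : 0 < K := Finset.sum_pos (fun h _ => one_div_pos.2 (hc0pos h)) Finset.univ_nonempty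
  have hkey : ∀ n : ℕ, m ≤ K * ((1 - ε) ^ (n / N) * m) := by
    intro n
    have hvg : ((A ^ n).mulVec v) g₀ = c ^ n * v g₀ := by
      rw [heign n]
      rfl
    have hθ : (0:ℝ) ≤ (1 - ε) ^ (n / N) := pow_nonneg h1ε _
    calc m = ‖c ^ n * v g₀‖ := by
          rw [norm_mul, norm_pow, ← hcabs, one_pow, one_mul]
      _ = ‖((A ^ n).mulVec v) g₀‖ := by rw [hvg]
      _ = ‖∑ h : ↥D, (A ^ n) g₀ h * v h‖ := rfl
      _ ≤ ∑ h : ↥D, ‖(A ^ n) g₀ h * v h‖ :=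
          norm_sum_le _ _
      _ = ∑ h : ↥D, (subMat (Bmat 𝒜 M) D ^ n) g₀ h * ‖v h‖ := by
          refine Finset.sum_congr rfl fun h _ => ?_
          rw [norm_mul]
          congr 1
          rw [hmap n]
          show ‖(Complex.ofReal _)‖ = _
          rw [Complex.norm_of_nonneg (BDpow_nonneg hM n g₀ h)]
      _ ≤ ∑ h : ↥D, ((1 / c0 h) * (1 - ε) ^ (n / N)) * m := by
          refine Finset.sum_le_sum fun h _ => ?_
          refine mul_le_mul (hentry n h) (hg₀ h (Finset.mem_univ _)) (norm_nonneg _) ?_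
          exact mul_nonneg (one_div_pos.2 (hc0pos h)).le hθ
      _ = K * ((1 - ε) ^ (n / N) * m) := by
          rw [hK, Finset.sum_mul]
          refine Finset.sum_congr rfl fun h _ => ?_
          ring
  obtain ⟨k, hk⟩ := exists_pow_lt_of_lt_one (one_div_pos.2 hKpos) h1ε1
  have hfin2 := hkey (k * N)
  rw [Nat.mul_div_cancel k hNpos] at hfin2
  have hlt : K * ((1 - ε) ^ k * m) < K * ((1 / K) * m) := by
    refine mul_lt_mul_of_pos_left ?_ hKpos
    exact mul_lt_mul_of_pos_right hk hmpos
  have hKm : K * ((1 / K) * m) = m := by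
    field_simp
  rw [hKm] at hlt
  linarith [hfin2]

end Spectral

/-- if `d ∈ d⇒w` is not a cut, one can enlarge it. -/
theorem stmt_4 {Q S : Type} [Fintype Q] [Fintype S]
    (𝒜 : BA Q S) (M : Matrix S S ℝ) (hM : IsMarkov M)
    (hU : 𝒜.Unambiguous) (hND : ¬ 𝒜.HasDiamond) (hAR : 𝒜.AllReachable)
    (D : Set (Q × S)) (hD : IsSCC (Bmat 𝒜 M) D) (hrec : RecurrentSCC 𝒜 M D)
    (d : Q × S) (hd : d ∈ D)
    (w : List S) (hwdef : Enabled M (d.2 :: w))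
    (hdin : d ∈ fibRun 𝒜 D {d} w)
    (hnotcut : ¬ IsCut 𝒜 M D (fibRun 𝒜 D {d} w)) :
    (∃ (v : List S) (e : Q × S), e ∈ D ∧ e ≠ d ∧ Enabled M (d.2 :: v) ∧
       d ∈ fibRun 𝒜 D {d} v ∧ e ∈ fibRun 𝒜 D {d} v ∧ fibRun 𝒜 D {e} w ≠ ∅) ∧
    ∀ (v : List S) (e : Q × S), e ∈ D → e ≠ d → Enabled M (d.2 :: v) →
      d ∈ fibRun 𝒜 D {d} v → e ∈ fibRun 𝒜 D {d} v → fibRun 𝒜 D {e} w ≠ ∅ →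
      (fibRun 𝒜 D {d} w ∩ fibRun 𝒜 D {e} w = ∅ ∧
       fibRun 𝒜 D {d, e} w ⊆ fibRun 𝒜 D {d} (v ++ w) ∧
       fibRun 𝒜 D {d} w ⊂ fibRun 𝒜 D {d, e} w) := by

  have hsingsub : ({d} : Set (Q × S)) ⊆ D := by rintro q rfl; exact hd
  have hsingfib : ∀ q ∈ ({d} : Set (Q × S)), (q : Q × S).2 = d.2 := by rintro q rfl; rfl
  constructor
  · -- existence of a suitable (v, e)
    by_contra hcon
    push_neg at hcon
    have hno : ¬ ∀ w' : List S, Enabled M (w.getLastD d.2 :: w') →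
        fibRun 𝒜 D (fibRun 𝒜 D {d} w) w' ≠ ∅ :=
      fun hall => hnotcut ⟨d, hd, w, hwdef, rfl, hall⟩
    push_neg at hno
    obtain ⟨u, huen, hu⟩ := hno
    have hA3 : ∀ v e, e ≠ d → Enabled M (d.2 :: v) → d ∈ fibRun 𝒜 D {d} v →
        e ∈ fibRun 𝒜 D {d} v → fibRun 𝒜 D {e} w = ∅ := by
      intro v e hne hen hdv hev
      have heD : e ∈ D := mem_D_of_mem_fibRun 𝒜 D hsingsub hev
      exact hcon v e heD hne hen hdv hev
    exact spectral_contradiction hM hND hD hd hwdef huen hu hA3 hrec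
  · -- the enlargement properties
    intro v e heD hne hen hdv hev hew
    have hdisj : fibRun 𝒜 D {d} w ∩ fibRun 𝒜 D {e} w = ∅ :=
      fib_disjoint 𝒜 D hND hdv hev hne
    refine ⟨hdisj, ?_, ?_⟩
    · rw [fibRun_append]
      refine fibRun_mono 𝒜 D ?_ w
      intro q hq
      rcases hq with rfl | hq
      · exact hdv
      · cases hq
        exact hev
    · have hsub : fibRun 𝒜 D {d} w ⊆ fibRun 𝒜 D {d, e} w :=
        fibRun_mono 𝒜 D (by intro q hq; cases hq; exact Set.mem_insert _ _) w
      obtain ⟨p, hp⟩ := Set.nonempty_iff_ne_empty.2 hew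
      have hpin : p ∈ fibRun 𝒜 D {d, e} w :=
        fibRun_mono 𝒜 D (by rintro q rfl; exact Set.mem_insert_of_mem _ rfl) w hp
      have hpnot : p ∉ fibRun 𝒜 D {d} w := by
        intro hpd
        have : p ∈ fibRun 𝒜 D {d} w ∩ fibRun 𝒜 D {e} w := ⟨hpd, hp⟩
        rw [hdisj] at this
        exact this
      rw [Set.ssubset_iff_subset_ne]
      exact ⟨hsub, fun heq => hpnot (heq ▸ hpin)⟩
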